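/- Let n ≥ 1, m ∈ ℝ, r ≥ 0, and let p : ℤⁿ → ℂ be a symbol of order m. Then the conjunction [p(D) is GH-s for every s > r, and p(D) is not GH-s for any s with 0 ≤ s < r] holds if and only if the following three conditions hold: (i) the set {ξ ∈ ℤⁿ : p(ξ) = 0} is finite; (ii) for every ε > 0 there exists K_ε > 0 such that |p(ξ)| ≥ K_ε·|ξ|^(m−(r+ε)) for all ξ ∈ ℤⁿ \ {0} with p(ξ) ≠ 0; (iii) if r > 0, then for every ε > 0 there exists K'_ε > 0 such that 0 < |p(ξ)| ≤ K'_ε·|ξ|^(m−(r−ε)) for infinitely many ξ ∈ ℤⁿ \ {0}. (This characterizes ind_GH(p(D)) = r, where ind_GH(p(D)) is the infimum of all s ≥ 0 for which p(D) is GH-s.) -/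

import Mathlib

open scoped BigOperators

/-- `|ξ| = Σⱼ |ξⱼ|`. -/
noncomputable def l1norm {n : ℕ} (ξ : Fin n → ℤ) : ℝ := ∑ j, |(ξ j : ℝ)|

/-- `‖ξ‖² = Σⱼ ξⱼ²`. -/
noncomputable def l2normSq {n : ℕ} (ξ : Fin n → ℤ) : ℝ := ∑ j, ((ξ j : ℝ)) ^ 2

/-- `u ∈ H^k(𝕋ⁿ)` in terms of its Fourier coefficients. -/
def InSobolev {n : ℕ} (k : ℝ) (u : (Fin n → ℤ) → ℂ) : Prop :=
  Summable fun ξ : Fin n → ℤ => (1 + l2normSq ξ) ^ k * ‖u ξ‖ ^ 2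

/-- Polynomial growth of Fourier coefficients (a distribution on `𝕋ⁿ`). -/
def PolyGrowth {n : ℕ} (u : (Fin n → ℤ) → ℂ) : Prop :=
  ∃ C N : ℝ, 0 < C ∧ 0 < N ∧
    ∀ ξ, ‖u ξ‖ ≤ C * (1 + Real.sqrt (l2normSq ξ)) ^ N

/-- Rapidly decreasing Fourier coefficients (a smooth function on `𝕋ⁿ`). -/
def RapidDecay {n : ℕ} (v : (Fin n → ℤ) → ℂ) : Prop :=
  ∀ N : ℝ, 0 < N → ∃ C : ℝ, 0 < C ∧
    ∀ ξ, ‖v ξ‖ ≤ C * (1 + Real.sqrt (l2normSq ξ)) ^ (-N)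

/-- `p` is a symbol of order `m`. -/
def SymbolOrder {n : ℕ} (m : ℝ) (p : (Fin n → ℤ) → ℂ) : Prop :=
  ∃ C : ℝ, 0 < C ∧ ∀ ξ, ‖p ξ‖ ≤ C * (1 + l2normSq ξ) ^ (m / 2)

/-- `p(D)` is globally hypoelliptic with loss of `r` derivatives (GH-`r`). -/
def GHr {n : ℕ} (m r : ℝ) (p : (Fin n → ℤ) → ℂ) : Prop :=
  ∀ (k : ℝ) (u : (Fin n → ℤ) → ℂ), PolyGrowth u →
    InSobolev k (fun ξ => p ξ * u ξ) → InSobolev (k + m - r) u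

/-- `p(D)` is globally solvable with loss of `r` derivatives (GS-`r`). -/
def GSr {n : ℕ} (m r : ℝ) (p : (Fin n → ℤ) → ℂ) : Prop :=
  ∀ (k : ℝ) (f : (Fin n → ℤ) → ℂ), InSobolev k f → (∀ ξ, p ξ = 0 → f ξ = 0) →
    ∃ u : (Fin n → ℤ) → ℂ, InSobolev (k + m - r) u ∧ ∀ ξ, p ξ * u ξ = f ξ

/-- `p(D)` is globally hypoelliptic (GH). -/
def GloballyHypoelliptic {n : ℕ} (p : (Fin n → ℤ) → ℂ) : Prop :=
  ∀ u : (Fin n → ℤ) → ℂ, PolyGrowth u →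
    RapidDecay (fun ξ => p ξ * u ξ) → RapidDecay u




section aux
variable {n : ℕ}

lemma l2_nonneg (ξ : Fin n → ℤ) : 0 ≤ l2normSq ξ :=
  Finset.sum_nonneg fun _ _ => sq_nonneg _

lemma w_pos (ξ : Fin n → ℤ) : 0 < 1 + l2normSq ξ := by linarith [l2_nonneg ξ]

lemma one_le_w (ξ : Fin n → ℤ) : 1 ≤ 1 + l2normSq ξ := by linarith [l2_nonneg ξ]

lemma l1_nonneg (ξ : Fin n → ℤ) : 0 ≤ l1norm ξ :=
  Finset.sum_nonneg fun _ _ => abs_nonneg _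

lemma sq_le_l2 (ξ : Fin n → ℤ) (i : Fin n) : (ξ i : ℝ) ^ 2 ≤ l2normSq ξ :=
  Finset.single_le_sum (f := fun j => ((ξ j : ℝ)) ^ 2) (fun _ _ => sq_nonneg _) (Finset.mem_univ i)

lemma exists_ne_coord {ξ : Fin n → ℤ} (hξ : ξ ≠ 0) : ∃ i, ξ i ≠ 0 := by
  by_contra h
  push_neg at h
  exact hξ (funext fun i => h i)

lemma one_le_l2 {ξ : Fin n → ℤ} (hξ : ξ ≠ 0) : 1 ≤ l2normSq ξ := by
  obtain ⟨i, hi⟩ := exists_ne_coord hξ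
  have h1 : (1 : ℝ) ≤ |(ξ i : ℝ)| := by
    rw [← Int.cast_abs]
    exact_mod_cast Int.one_le_abs hi
  calc (1:ℝ) = 1 ^ 2 := by ring
  _ ≤ |(ξ i : ℝ)| ^ 2 := by nlinarith
  _ = (ξ i : ℝ) ^ 2 := sq_abs _
  _ ≤ l2normSq ξ := sq_le_l2 ξ i

lemma one_le_l1 {ξ : Fin n → ℤ} (hξ : ξ ≠ 0) : 1 ≤ l1norm ξ := by
  obtain ⟨i, hi⟩ := exists_ne_coord hξ
  have h1 : (1 : ℝ) ≤ |(ξ i : ℝ)| := by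
    rw [← Int.cast_abs]
    exact_mod_cast Int.one_le_abs hi
  calc (1:ℝ) ≤ |(ξ i : ℝ)| := h1
  _ ≤ l1norm ξ := Finset.single_le_sum (f := fun j => |(ξ j : ℝ)|) (fun _ _ => abs_nonneg _) (Finset.mem_univ i)

lemma l1_pos {ξ : Fin n → ℤ} (hξ : ξ ≠ 0) : 0 < l1norm ξ :=
  lt_of_lt_of_le one_pos (one_le_l1 hξ)

lemma l2_le_l1_sq (ξ : Fin n → ℤ) : l2normSq ξ ≤ l1norm ξ ^ 2 := by
  have := Finset.sum_sq_le_sq_sum_of_nonneg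
    (s := (Finset.univ : Finset (Fin n))) (f := fun i => |(ξ i : ℝ)|)
    (fun i _ => abs_nonneg _)
  simpa [l2normSq, l1norm, sq_abs] using this

lemma l1_sq_le_n_w (ξ : Fin n → ℤ) : l1norm ξ ^ 2 ≤ n * (1 + l2normSq ξ) := by
  have h := sq_sum_le_card_mul_sum_sq
    (s := (Finset.univ : Finset (Fin n))) (f := fun i => |(ξ i : ℝ)|)
  simp only [Finset.card_univ, Fintype.card_fin] at h
  have h2 : (∑ i, |(ξ i : ℝ)| ^ 2) = l2normSq ξ := by
    simp [l2normSq, sq_abs]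
  have h3 : l1norm ξ ^ 2 ≤ (n : ℝ) * l2normSq ξ := by
    rw [l1norm, ← h2]; exact_mod_cast h
  nlinarith [l2_nonneg ξ, Nat.cast_nonneg (α := ℝ) n]

lemma w_le_two_l1_sq {ξ : Fin n → ℤ} (hξ : ξ ≠ 0) :
    1 + l2normSq ξ ≤ 2 * l1norm ξ ^ 2 := by
  have h1 := one_le_l2 hξ
  have h2 := l2_le_l1_sq ξ
  linarith

end aux
section bridge
variable {n : ℕ}

lemma l1_rpow_eq (ξ : Fin n → ℤ) (t : ℝ) :
    l1norm ξ ^ t = (l1norm ξ ^ 2) ^ (t / 2) := by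
  rw [← Real.rpow_natCast (l1norm ξ) 2, ← Real.rpow_mul (l1_nonneg ξ)]
  congr 1
  push_cast
  ring

lemma l1_rpow_lower (hn : 0 < n) (t : ℝ) : ∃ c : ℝ, 0 < c ∧
    ∀ ξ : Fin n → ℤ, ξ ≠ 0 → c * (1 + l2normSq ξ) ^ (t / 2) ≤ l1norm ξ ^ t := by
  have hnpos : (0:ℝ) < (n:ℝ) := by exact_mod_cast hn
  refine ⟨min ((1/2 : ℝ) ^ (t/2)) ((n:ℝ) ^ (t/2)), lt_min (Real.rpow_pos_of_pos one_half_pos _)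
    (Real.rpow_pos_of_pos hnpos _), fun ξ hξ => ?_⟩
  have hw := w_pos ξ
  have hwn := one_le_w ξ
  rw [l1_rpow_eq]
  rcases le_or_gt 0 (t/2) with ht | ht
  · have hb : (1 + l2normSq ξ) * (1/2) ≤ l1norm ξ ^ 2 := by
      have := w_le_two_l1_sq hξ; linarith
    calc min ((1/2:ℝ) ^ (t/2)) ((n:ℝ) ^ (t/2)) * (1 + l2normSq ξ) ^ (t/2)
        ≤ (1/2:ℝ) ^ (t/2) * (1 + l2normSq ξ) ^ (t/2) := by
          apply mul_le_mul_of_nonneg_right (min_le_left _ _) (Real.rpow_nonneg (le_of_lt hw) _)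
      _ = ((1 + l2normSq ξ) * (1/2)) ^ (t/2) := by
          rw [Real.mul_rpow (le_of_lt hw) (by norm_num)]; ring
      _ ≤ (l1norm ξ ^ 2) ^ (t/2) := Real.rpow_le_rpow (by positivity) hb ht
  · have hb : l1norm ξ ^ 2 ≤ (1 + l2normSq ξ) * n := by
      have := l1_sq_le_n_w ξ; linarith
    calc min ((1/2:ℝ) ^ (t/2)) ((n:ℝ) ^ (t/2)) * (1 + l2normSq ξ) ^ (t/2)
        ≤ (n:ℝ) ^ (t/2) * (1 + l2normSq ξ) ^ (t/2) := by
          apply mul_le_mul_of_nonneg_right (min_le_right _ _) (Real.rpow_nonneg (le_of_lt hw) _)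
      _ = ((1 + l2normSq ξ) * n) ^ (t/2) := by
          rw [Real.mul_rpow (le_of_lt hw) (le_of_lt hnpos)]; ring
      _ ≤ (l1norm ξ ^ 2) ^ (t/2) :=
          Real.rpow_le_rpow_of_nonpos (pow_pos (l1_pos hξ) 2) hb (le_of_lt ht)

lemma l1_rpow_upper (hn : 0 < n) (t : ℝ) : ∃ C : ℝ, 0 < C ∧
    ∀ ξ : Fin n → ℤ, ξ ≠ 0 → l1norm ξ ^ t ≤ C * (1 + l2normSq ξ) ^ (t / 2) := by
  have hnpos : (0:ℝ) < (n:ℝ) := by exact_mod_cast hn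
  refine ⟨max ((1/2 : ℝ) ^ (t/2)) ((n:ℝ) ^ (t/2)), lt_max_of_lt_left (Real.rpow_pos_of_pos one_half_pos _),
    fun ξ hξ => ?_⟩
  have hw := w_pos ξ
  rw [l1_rpow_eq]
  rcases le_or_gt 0 (t/2) with ht | ht
  · have hb : l1norm ξ ^ 2 ≤ (1 + l2normSq ξ) * n := by
      have := l1_sq_le_n_w ξ; linarith
    calc (l1norm ξ ^ 2) ^ (t/2) ≤ ((1 + l2normSq ξ) * n) ^ (t/2) :=
          Real.rpow_le_rpow (by positivity) hb ht
      _ = (n:ℝ) ^ (t/2) * (1 + l2normSq ξ) ^ (t/2) := by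
          rw [Real.mul_rpow (le_of_lt hw) (le_of_lt hnpos)]; ring
      _ ≤ max ((1/2:ℝ) ^ (t/2)) ((n:ℝ) ^ (t/2)) * (1 + l2normSq ξ) ^ (t/2) := by
          apply mul_le_mul_of_nonneg_right (le_max_right _ _) (Real.rpow_nonneg (le_of_lt hw) _)
  · have hb : (1 + l2normSq ξ) * (1/2) ≤ l1norm ξ ^ 2 := by
      have := w_le_two_l1_sq hξ; linarith
    calc (l1norm ξ ^ 2) ^ (t/2) ≤ ((1 + l2normSq ξ) * (1/2)) ^ (t/2) :=
          Real.rpow_le_rpow_of_nonpos (mul_pos hw one_half_pos) hb (le_of_lt ht)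
      _ = (1/2:ℝ) ^ (t/2) * (1 + l2normSq ξ) ^ (t/2) := by
          rw [Real.mul_rpow (le_of_lt hw) (by norm_num)]; ring
      _ ≤ max ((1/2:ℝ) ^ (t/2)) ((n:ℝ) ^ (t/2)) * (1 + l2normSq ξ) ^ (t/2) := by
          apply mul_le_mul_of_nonneg_right (le_max_left _ _) (Real.rpow_nonneg (le_of_lt hw) _)

lemma finite_sublevel (M : ℝ) : {ξ : Fin n → ℤ | l2normSq ξ ≤ M}.Finite := by
  set b : ℤ := ⌈Real.sqrt M⌉
  apply Set.Finite.subset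
    (Set.Finite.pi (t := fun _ : Fin n => Set.Icc (-b) b) fun i => Set.finite_Icc _ _)
  intro ξ hξ
  simp only [Set.mem_pi, Set.mem_univ, Set.mem_Icc, forall_true_left]
  intro i
  have h1 : (ξ i : ℝ) ^ 2 ≤ M := le_trans (sq_le_l2 ξ i) hξ
  have h2 : |(ξ i : ℝ)| ≤ Real.sqrt M := by
    rw [← Real.sqrt_sq_eq_abs]
    exact Real.sqrt_le_sqrt h1
  have h3 : |(ξ i : ℝ)| ≤ (b : ℝ) := le_trans h2 (Int.le_ceil _)
  have h4 : |ξ i| ≤ b := by exact_mod_cast (by rwa [← Int.cast_abs] at h3 : ((|ξ i| : ℤ) : ℝ) ≤ (b:ℝ))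
  exact abs_le.mp h4

lemma exists_big {S : Set (Fin n → ℤ)} (hS : S.Infinite) (M : ℝ) :
    ∃ ξ ∈ S, M < l2normSq ξ := by
  by_contra h
  push_neg at h
  exact hS (Set.Finite.subset (finite_sublevel M) h)
section pick
variable {α : Type*} [DecidableEq α]

noncomputable def pickSeq (T : ℕ → Set α)
    (aux : ∀ (F : Finset α) (j : ℕ), ∃ x, x ∈ T j ∧ x ∉ F) : ℕ → α
  | j => (aux (Finset.univ.image fun i : Fin j => pickSeq T aux i) j).choose
  termination_by j => j
  decreasing_by simp_wf; exact i.isLt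

lemma pickSeq_mem (T : ℕ → Set α) (aux) (j : ℕ) : pickSeq T aux j ∈ T j := by
  rw [pickSeq]
  exact (aux _ j).choose_spec.1

lemma pickSeq_ne (T : ℕ → Set α) (aux) {i j : ℕ} (h : i < j) :
    pickSeq T aux j ≠ pickSeq T aux i := by
  conv_lhs => rw [pickSeq]
  intro hEq
  have := (aux (Finset.univ.image fun i : Fin j => pickSeq T aux i) j).choose_spec.2
  apply this
  rw [hEq]
  exact Finset.mem_image.mpr ⟨⟨i, h⟩, Finset.mem_univ _, rfl⟩

lemma exists_inj_seq (T : ℕ → Set α)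
    (hmono : ∀ i j : ℕ, i ≤ j → T j ⊆ T i)
    (hne : ∀ j, (T j).Nonempty)
    (hev : ∀ x, ∃ j, x ∉ T j) :
    ∃ a : ℕ → α, Function.Injective a ∧ ∀ j, a j ∈ T j := by
  classical
  have aux : ∀ (F : Finset α) (j : ℕ), ∃ x, x ∈ T j ∧ x ∉ F := by
    intro F j
    -- choose a level beyond which every element of F is excluded
    have hlev : ∀ x, ∃ jx, ∀ j' ≥ jx, x ∉ T j' := by
      intro x
      obtain ⟨jx, hjx⟩ := hev x
      exact ⟨jx, fun j' hj' hx => hjx (hmono jx j' hj' hx)⟩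
    choose lev hlev using hlev
    set J : ℕ := max j (F.sup lev + 1) with hJ
    obtain ⟨x, hx⟩ := hne J
    refine ⟨x, hmono j J (le_max_left _ _) hx, fun hxF => ?_⟩
    have h1 : lev x ≤ F.sup lev := Finset.le_sup hxF
    have h2 : lev x ≤ J := le_trans (Nat.le_succ_of_le h1) (le_max_right _ _)
    exact hlev x J h2 hx
  refine ⟨pickSeq T aux, ?_, pickSeq_mem T aux⟩
  intro i j hij
  rcases lt_trichotomy i j with h | h | h
  · exact absurd hij.symm (pickSeq_ne T aux h)
  · exact h
  · exact absurd hij (pickSeq_ne T aux h)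

end pick
section core
variable {n : ℕ}

lemma rpow_sq {x : ℝ} (hx : 0 ≤ x) (t : ℝ) : (x ^ t) ^ 2 = x ^ (2 * t) := by
  rw [← Real.rpow_natCast (x ^ t) 2, ← Real.rpow_mul hx]
  congr 1
  push_cast
  ring

lemma notGH (m s : ℝ) (p : (Fin n → ℤ) → ℂ) (a : ℕ → (Fin n → ℤ))
    (ha : Function.Injective a) (h0 : ∀ j, p (a j) ≠ 0)
    (hsum : Summable fun j =>
      ‖p (a j)‖ ^ 2 * (1 + l2normSq (a j)) ^ (-(m - s))) :
    ¬ GHr m s p := by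
  classical
  intro hGH
  set u : (Fin n → ℤ) → ℂ := fun ξ =>
    if ξ ∈ Set.range a then (((1 + l2normSq ξ) ^ (-(m - s) / 2) : ℝ) : ℂ) else 0 with hu
  have habs : ∀ ξ, ‖u ξ‖ =
      if ξ ∈ Set.range a then (1 + l2normSq ξ) ^ (-(m - s) / 2) else 0 := by
    intro ξ
    rw [hu]
    by_cases h : ξ ∈ Set.range a
    · simp only [h, if_true]
      rw [Complex.norm_real, Real.norm_eq_abs, abs_of_pos (Real.rpow_pos_of_pos (w_pos ξ) _)]
    · simp [h]
  have hpoly : PolyGrowth u := by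
    refine ⟨1, |m - s| + 1, one_pos, by positivity, fun ξ => ?_⟩
    have hbase : (1:ℝ) ≤ 1 + Real.sqrt (l2normSq ξ) := by
      have := Real.sqrt_nonneg (l2normSq ξ); linarith
    have h2 : (1 + l2normSq ξ) ≤ (1 + Real.sqrt (l2normSq ξ)) ^ (2:ℕ) := by
      have hs2 : Real.sqrt (l2normSq ξ) ^ 2 = l2normSq ξ := Real.sq_sqrt (l2_nonneg ξ)
      have := Real.sqrt_nonneg (l2normSq ξ)
      nlinarith
    rw [habs ξ, one_mul]
    have hle1 : (if ξ ∈ Set.range a then (1 + l2normSq ξ) ^ (-(m - s) / 2) else 0)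
        ≤ (1 + l2normSq ξ) ^ (|m - s| / 2) := by
      split
      · exact Real.rpow_le_rpow_of_exponent_le (one_le_w ξ)
          (by have := neg_le_abs (m - s); linarith)
      · exact Real.rpow_nonneg (le_of_lt (w_pos ξ)) _
    refine le_trans hle1 ?_
    calc (1 + l2normSq ξ) ^ (|m - s| / 2)
        ≤ ((1 + Real.sqrt (l2normSq ξ)) ^ (2:ℕ)) ^ (|m - s| / 2) :=
          Real.rpow_le_rpow (le_of_lt (w_pos ξ)) h2 (by positivity)
      _ = (1 + Real.sqrt (l2normSq ξ)) ^ (2 * (|m - s| / 2)) := by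
          rw [← Real.rpow_natCast (1 + Real.sqrt (l2normSq ξ)) 2,
            ← Real.rpow_mul (by linarith : (0:ℝ) ≤ 1 + Real.sqrt (l2normSq ξ))]
          norm_num
      _ ≤ (1 + Real.sqrt (l2normSq ξ)) ^ (|m - s| + 1) := by
          apply Real.rpow_le_rpow_of_exponent_le hbase
          have := abs_nonneg (m - s)
          linarith
  have hvanish : ∀ ξ ∉ Set.range a,
      (1 + l2normSq ξ) ^ (0:ℝ) * ‖p ξ * u ξ‖ ^ 2 = 0 := by
    intro ξ hξ
    have : u ξ = 0 := by rw [hu]; simp [hξ]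
    rw [this]
    simp
  have hcomp : Summable ((fun ξ => (1 + l2normSq ξ) ^ (0:ℝ) * ‖p ξ * u ξ‖ ^ 2) ∘ a) := by
    apply hsum.congr
    intro j
    simp only [Function.comp_apply]
    rw [Real.rpow_zero, one_mul, norm_mul, mul_pow, habs]
    rw [if_pos (Set.mem_range_self j), rpow_sq (le_of_lt (w_pos (a j)))]
    congr 2
    ring
  have hin : InSobolev 0 (fun ξ => p ξ * u ξ) :=
    (Function.Injective.summable_iff ha hvanish).mp hcomp
  have hout : InSobolev (0 + m - s) u := hGH 0 u hpoly hin
  have hcomp2 : Summable ((fun ξ => (1 + l2normSq ξ) ^ (0 + m - s) * ‖u ξ‖ ^ 2) ∘ a) :=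
    hout.comp_injective ha
  have heq1 : ((fun ξ => (1 + l2normSq ξ) ^ (0 + m - s) * ‖u ξ‖ ^ 2) ∘ a)
      = fun _ => (1:ℝ) := by
    funext j
    simp only [Function.comp_apply]
    rw [habs, if_pos (Set.mem_range_self j), rpow_sq (le_of_lt (w_pos (a j))),
      ← Real.rpow_add (w_pos (a j))]
    rw [show (0 + m - s) + 2 * (-(m - s) / 2) = 0 by ring, Real.rpow_zero]
  rw [heq1] at hcomp2
  exact one_ne_zero (tendsto_nhds_unique tendsto_const_nhds hcomp2.tendsto_atTop_zero)

end core
section suff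
variable {n : ℕ}

lemma suffGH (m s : ℝ) (p : (Fin n → ℤ) → ℂ)
    (hZ : {ξ : Fin n → ℤ | p ξ = 0}.Finite)
    (E : Set (Fin n → ℤ)) (hE : E.Finite) (K : ℝ) (hK : 0 < K)
    (hlow : ∀ ξ, ξ ∉ E → p ξ ≠ 0 →
      K * (1 + l2normSq ξ) ^ ((m - s) / 2) ≤ ‖p ξ‖) :
    GHr m s p := by
  classical
  intro k u hu hpu
  set B : Finset (Fin n → ℤ) := hZ.toFinset ∪ hE.toFinset with hB
  set F : (Fin n → ℤ) → ℝ :=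
    fun ξ => (1 + l2normSq ξ) ^ (k + m - s) * ‖u ξ‖ ^ 2 with hF
  have hFnonneg : ∀ ξ, 0 ≤ F ξ := fun ξ =>
    mul_nonneg (Real.rpow_nonneg (le_of_lt (w_pos ξ)) _) (sq_nonneg _)
  have h1 : Summable (fun ξ => if ξ ∈ B then F ξ else 0) :=
    summable_of_ne_finset_zero (s := B) (fun b hb => if_neg hb)
  have hpu' : Summable (fun ξ => K⁻¹ ^ 2 *
      ((1 + l2normSq ξ) ^ k * ‖p ξ * u ξ‖ ^ 2)) := by
    exact (hpu.mul_left _)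
  have h2 : Summable (fun ξ => if ξ ∈ B then 0 else F ξ) := by
    apply Summable.of_nonneg_of_le _ _ hpu'
    · intro ξ
      split
      · exact le_refl 0
      · exact hFnonneg ξ
    · intro ξ
      by_cases hmem : ξ ∈ B
      · rw [if_pos hmem]
        have := w_pos ξ
        positivity
      · rw [if_neg hmem]
        rw [hB, Finset.mem_union, not_or, Set.Finite.mem_toFinset, Set.Finite.mem_toFinset] at hmem
        obtain ⟨hp0, hEmem⟩ := hmem
        have hp0 : p ξ ≠ 0 := hp0
        have hl := hlow ξ hEmem hp0
        set w := 1 + l2normSq ξ with hw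
        have hwpos : 0 < w := w_pos ξ
        set A := w ^ ((m - s) / 2) with hA
        have hApos : 0 < A := Real.rpow_pos_of_pos hwpos _
        set X := ‖p ξ‖ with hX
        set Y := ‖u ξ‖ with hY
        have hYnn : 0 ≤ Y := norm_nonneg _
        have h3 : K * A * Y ≤ X * Y := mul_le_mul_of_nonneg_right hl hYnn
        have h4 : (K * A * Y) ^ 2 ≤ (X * Y) ^ 2 :=
          pow_le_pow_left₀ (by positivity) h3 2
        have hmul : ‖p ξ * u ξ‖ = X * Y := norm_mul _ _
        have hid : w ^ (k + m - s) = w ^ k * A ^ 2 := by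
          rw [hA, rpow_sq (le_of_lt hwpos), ← Real.rpow_add hwpos]
          congr 1
          ring
        show w ^ (k + m - s) * Y ^ 2 ≤
          K⁻¹ ^ 2 * (w ^ k * ‖p ξ * u ξ‖ ^ 2)
        rw [hmul, hid]
        have hK2 : (0:ℝ) < K ^ 2 := by positivity
        have h5 : A ^ 2 * Y ^ 2 ≤ K⁻¹ ^ 2 * (X * Y) ^ 2 := by
          rw [inv_pow, inv_mul_eq_div, le_div_iff₀ hK2]
          nlinarith [h4]
        calc w ^ k * A ^ 2 * Y ^ 2 = w ^ k * (A ^ 2 * Y ^ 2) := by ring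
          _ ≤ w ^ k * (K⁻¹ ^ 2 * (X * Y) ^ 2) :=
              mul_le_mul_of_nonneg_left h5 (Real.rpow_nonneg (le_of_lt hwpos) _)
          _ = K⁻¹ ^ 2 * (w ^ k * (X * Y) ^ 2) := by ring
  have hsplit : F = fun ξ =>
      (if ξ ∈ B then F ξ else 0) + (if ξ ∈ B then 0 else F ξ) := by
    funext ξ
    by_cases h : ξ ∈ B <;> simp [h]
  show Summable F
  rw [hsplit]
  exact h1.add h2

end suff
section parts
variable {n : ℕ}

lemma zeroset_finite (m s : ℝ) (p : (Fin n → ℤ) → ℂ) (hGH : GHr m s p) :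
    {ξ : Fin n → ℤ | p ξ = 0}.Finite := by
  classical
  by_contra hinf
  set u : (Fin n → ℤ) → ℂ := fun ξ => if p ξ = 0 then 1 else 0 with hu
  have hpoly : PolyGrowth u := by
    refine ⟨1, 1, one_pos, one_pos, fun ξ => ?_⟩
    have h1 : (1:ℝ) ≤ 1 + Real.sqrt (l2normSq ξ) := by
      have := Real.sqrt_nonneg (l2normSq ξ); linarith
    have h2 : ‖u ξ‖ ≤ 1 := by
      by_cases h : p ξ = 0 <;> simp [hu, h]
    calc ‖u ξ‖ ≤ 1 := h2
      _ ≤ 1 * (1 + Real.sqrt (l2normSq ξ)) ^ (1:ℝ) := by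
          rw [one_mul, Real.rpow_one]; exact h1
  have hzero : (fun ξ => p ξ * u ξ) = fun _ => (0:ℂ) := by
    funext ξ
    by_cases h : p ξ = 0 <;> simp [hu, h]
  have hins : InSobolev (s - m) (fun ξ => p ξ * u ξ) := by
    unfold InSobolev
    rw [hzero]
    simpa using summable_zero
  have hout : InSobolev ((s - m) + m - s) u := hGH (s - m) u hpoly hins
  rw [show (s - m) + m - s = (0:ℝ) by ring] at hout
  have hev : ∀ᶠ ξ in Filter.cofinite,
      (1 + l2normSq ξ) ^ (0:ℝ) * ‖u ξ‖ ^ 2 < 1 :=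
    hout.tendsto_cofinite_zero.eventually_lt_const one_pos
  rw [Filter.eventually_cofinite] at hev
  apply hinf
  apply hev.subset
  intro ξ hξ
  simp only [Set.mem_setOf_eq, not_lt]
  have hpξ : p ξ = 0 := hξ
  rw [Real.rpow_zero, one_mul]
  simp [hu, hpξ]

lemma lower_bound_of_GH (hn' : 0 < n) (m s t : ℝ) (p : (Fin n → ℤ) → ℂ)
    (ht : t - (m - s) ≤ 0) (hGH : GHr m s p) :
    ∃ K : ℝ, 0 < K ∧ ∀ ξ : Fin n → ℤ, ξ ≠ 0 → p ξ ≠ 0 →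
      K * l1norm ξ ^ t ≤ ‖p ξ‖ := by
  classical
  by_contra hno
  push_neg at hno
  obtain ⟨C, hC, hCu⟩ := l1_rpow_upper hn' t
  set T : ℕ → Set (Fin n → ℤ) := fun j =>
    {ξ | ξ ≠ 0 ∧ p ξ ≠ 0 ∧ ‖p ξ‖ ≤ (1/2:ℝ)^j * l1norm ξ ^ t} with hT
  have hmono : ∀ i j : ℕ, i ≤ j → T j ⊆ T i := by
    intro i j hij ξ hξ
    refine ⟨hξ.1, hξ.2.1, le_trans hξ.2.2 ?_⟩
    exact mul_le_mul_of_nonneg_right (pow_le_pow_of_le_one (by norm_num) (by norm_num) hij)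
      (Real.rpow_nonneg (l1_nonneg ξ) t)
  have hne : ∀ j, (T j).Nonempty := by
    intro j
    obtain ⟨ξ, h1, h2, h3⟩ := hno ((1/2:ℝ)^j) (by positivity)
    exact ⟨ξ, h1, h2, le_of_lt h3⟩
  have hev : ∀ ξ, ∃ j, ξ ∉ T j := by
    intro ξ
    by_cases h1 : ξ ≠ 0 ∧ p ξ ≠ 0
    · have hl1 : 0 < l1norm ξ ^ t := Real.rpow_pos_of_pos (l1_pos h1.1) t
      have hppos : 0 < ‖p ξ‖ := norm_pos_iff.mpr h1.2
      obtain ⟨j, hj⟩ := exists_pow_lt_of_lt_one (div_pos hppos hl1)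
        (by norm_num : (1/2:ℝ) < 1)
      refine ⟨j, fun hmem => ?_⟩
      have h2 := hmem.2.2
      have h3 : (1/2:ℝ)^j * l1norm ξ ^ t < ‖p ξ‖ := (lt_div_iff₀ hl1).mp hj
      linarith
    · exact ⟨0, fun hmem => h1 ⟨hmem.1, hmem.2.1⟩⟩
  obtain ⟨a, hainj, hamem⟩ := exists_inj_seq T hmono hne hev
  refine notGH m s p a hainj (fun j => (hamem j).2.1) ?_ hGH
  refine Summable.of_nonneg_of_le (f := fun j : ℕ => (1/2:ℝ)^j * C^2)
    (fun j => mul_nonneg (sq_nonneg _) (Real.rpow_nonneg (le_of_lt (w_pos _)) _))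
    ?_ ((summable_geometric_of_lt_one (by norm_num) (by norm_num)).mul_right (C^2))
  intro j
  obtain ⟨hm1, hm2, hm3⟩ := hamem j
  set ξ := a j
  have hwpos := w_pos ξ
  have hb : ‖p ξ‖ ≤ (1/2:ℝ)^j * (C * (1 + l2normSq ξ) ^ (t/2)) :=
    le_trans hm3 (mul_le_mul_of_nonneg_left (hCu ξ hm1) (by positivity))
  calc ‖p ξ‖^2 * (1 + l2normSq ξ) ^ (-(m - s))
      ≤ ((1/2:ℝ)^j * (C * (1 + l2normSq ξ) ^ (t/2)))^2 * (1 + l2normSq ξ) ^ (-(m - s)) :=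
        mul_le_mul_of_nonneg_right (pow_le_pow_left₀ (norm_nonneg _) hb 2)
          (Real.rpow_nonneg (le_of_lt hwpos) _)
    _ = ((1/2:ℝ)^j)^2 * C^2 * (((1 + l2normSq ξ) ^ (t/2))^2 * (1 + l2normSq ξ) ^ (-(m - s))) := by
        ring
    _ = ((1/2:ℝ)^j)^2 * C^2 * (1 + l2normSq ξ) ^ (t - (m - s)) := by
        rw [rpow_sq (le_of_lt hwpos), ← Real.rpow_add hwpos]
        congr 2
        ring
    _ ≤ (1/2:ℝ)^j * C^2 := by
        have h1 : ((1/2:ℝ)^j)^2 ≤ (1/2:ℝ)^j := by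
          have ha : (0:ℝ) ≤ (1/2:ℝ)^j := by positivity
          have hb' : (1/2:ℝ)^j ≤ 1 := pow_le_one₀ (by norm_num) (by norm_num)
          nlinarith
        have h2 : (1 + l2normSq ξ) ^ (t - (m - s)) ≤ 1 :=
          Real.rpow_le_one_of_one_le_of_nonpos (one_le_w ξ) ht
        have h3 : (0:ℝ) ≤ (1 + l2normSq ξ) ^ (t - (m - s)) :=
          Real.rpow_nonneg (le_of_lt hwpos) _
        have ha : (0:ℝ) ≤ (1/2:ℝ)^j := by positivity
        nlinarith [mul_le_mul_of_nonneg_right (mul_le_mul h1 h2 h3 ha) (sq_nonneg C)]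

lemma notGH_of_infinite (hn' : 0 < n) (m s t : ℝ) (p : (Fin n → ℤ) → ℂ) (K' : ℝ)
    (ht : t - (m - s) < 0)
    (hS : {ξ : Fin n → ℤ | ξ ≠ 0 ∧ 0 < ‖p ξ‖ ∧
      ‖p ξ‖ ≤ K' * l1norm ξ ^ t}.Infinite) :
    ¬ GHr m s p := by
  classical
  intro hGH
  obtain ⟨C, hC, hCu⟩ := l1_rpow_upper hn' t
  set S : Set (Fin n → ℤ) := {ξ | ξ ≠ 0 ∧ 0 < ‖p ξ‖ ∧
      ‖p ξ‖ ≤ K' * l1norm ξ ^ t} with hSdef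
  set q : (Fin n → ℤ) → ℝ :=
    fun ξ => ‖p ξ‖^2 * (1 + l2normSq ξ) ^ (-(m - s)) with hq
  set T : ℕ → Set (Fin n → ℤ) := fun j => {ξ | ξ ∈ S ∧ q ξ ≤ (1/2:ℝ)^j} with hT
  have hmono : ∀ i j : ℕ, i ≤ j → T j ⊆ T i := by
    intro i j hij ξ hξ
    exact ⟨hξ.1, le_trans hξ.2 (pow_le_pow_of_le_one (by norm_num) (by norm_num) hij)⟩
  -- on S, q ξ ≤ (K'C)^2 * w^(t-(m-s))
  have hqS : ∀ ξ ∈ S, q ξ ≤ (K' * C)^2 * (1 + l2normSq ξ) ^ (t - (m - s)) := by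
    intro ξ hξ
    obtain ⟨h1, h2, h3⟩ := hξ
    have hwpos := w_pos ξ
    have hK'0 : 0 ≤ K' := by
      by_contra hneg
      push_neg at hneg
      have : K' * l1norm ξ ^ t < 0 :=
        mul_neg_of_neg_of_pos hneg (Real.rpow_pos_of_pos (l1_pos h1) t)
      linarith
    have hb : ‖p ξ‖ ≤ K' * C * (1 + l2normSq ξ) ^ (t/2) := by
      calc ‖p ξ‖ ≤ K' * l1norm ξ ^ t := h3
        _ ≤ K' * (C * (1 + l2normSq ξ) ^ (t/2)) :=
            mul_le_mul_of_nonneg_left (hCu ξ h1) hK'0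
        _ = K' * C * (1 + l2normSq ξ) ^ (t/2) := by ring
    calc q ξ ≤ (K' * C * (1 + l2normSq ξ) ^ (t/2))^2 * (1 + l2normSq ξ) ^ (-(m - s)) :=
          mul_le_mul_of_nonneg_right (pow_le_pow_left₀ (norm_nonneg _) hb 2)
            (Real.rpow_nonneg (le_of_lt hwpos) _)
      _ = (K' * C)^2 * (((1 + l2normSq ξ) ^ (t/2))^2 * (1 + l2normSq ξ) ^ (-(m - s))) := by ring
      _ = (K' * C)^2 * (1 + l2normSq ξ) ^ (t - (m - s)) := by
          rw [rpow_sq (le_of_lt hwpos), ← Real.rpow_add hwpos]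
          congr 2
          ring
  have hne : ∀ j, (T j).Nonempty := by
    intro j
    set δ : ℝ := -(t - (m - s)) with hδ
    have hδpos : 0 < δ := by rw [hδ]; linarith
    set D : ℝ := (K' * C)^2 + 1 with hD
    have hDpos : 0 < D := by positivity
    set M : ℝ := (D * 2^j) ^ (1/δ) with hM
    have hMpos : 0 < M := Real.rpow_pos_of_pos (by positivity) _
    obtain ⟨ξ, hξS, hξM⟩ := exists_big hS M
    have hwM : M < 1 + l2normSq ξ := by linarith [hξM, (by linarith [l2_nonneg ξ] : l2normSq ξ < 1 + l2normSq ξ)]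
    have hwpos := w_pos ξ
    refine ⟨ξ, hξS, ?_⟩
    have hMδ : (D * 2^j) ≤ (1 + l2normSq ξ) ^ δ := by
      have h1 : M ^ δ = D * 2^j := by
        rw [hM, ← Real.rpow_mul (by positivity), one_div,
          inv_mul_cancel₀ (ne_of_gt hδpos), Real.rpow_one]
      rw [← h1]
      exact Real.rpow_le_rpow (le_of_lt hMpos) (le_of_lt hwM) (le_of_lt hδpos)
    have hwδ : (1 + l2normSq ξ) ^ (t - (m - s)) ≤ (D * 2^j)⁻¹ := by
      rw [show t - (m - s) = -δ by rw [hδ]; ring, Real.rpow_neg (le_of_lt hwpos)]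
      exact inv_anti₀ (by positivity) hMδ
    calc q ξ ≤ (K' * C)^2 * (1 + l2normSq ξ) ^ (t - (m - s)) := hqS ξ hξS
      _ ≤ D * (D * 2^j)⁻¹ := by
          apply mul_le_mul (by rw [hD]; linarith) hwδ
            (Real.rpow_nonneg (le_of_lt hwpos) _) (le_of_lt hDpos)
      _ ≤ (1/2:ℝ)^j := by
          rw [mul_inv, ← mul_assoc, mul_inv_cancel₀ (ne_of_gt hDpos), one_mul,
            one_div, inv_pow]
  have hev : ∀ ξ, ∃ j, ξ ∉ T j := by
    intro ξ
    by_cases hξS : ξ ∈ S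
    · have hqpos : 0 < q ξ := by
        rw [hq]
        exact mul_pos (pow_pos hξS.2.1 2) (Real.rpow_pos_of_pos (w_pos ξ) _)
      obtain ⟨j, hj⟩ := exists_pow_lt_of_lt_one hqpos (by norm_num : (1/2:ℝ) < 1)
      exact ⟨j, fun hmem => absurd hmem.2 (not_le.mpr hj)⟩
    · exact ⟨0, fun hmem => hξS hmem.1⟩
  obtain ⟨a, hainj, hamem⟩ := exists_inj_seq T hmono hne hev
  refine notGH m s p a hainj
    (fun j => norm_pos_iff.mp (hamem j).1.2.1) ?_ hGH
  exact Summable.of_nonneg_of_le (f := fun j : ℕ => (1/2:ℝ)^j)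
    (fun j => mul_nonneg (sq_nonneg _) (Real.rpow_nonneg (le_of_lt (w_pos _)) _))
    (fun j => (hamem j).2)
    (summable_geometric_of_lt_one (by norm_num) (by norm_num))

lemma GH_of_l1_lower (hn' : 0 < n) (m s t : ℝ) (ht : m - s ≤ t) (p : (Fin n → ℤ) → ℂ)
    (hfin : {ξ : Fin n → ℤ | p ξ = 0}.Finite)
    (E : Set (Fin n → ℤ)) (hE : E.Finite) (K : ℝ) (hK : 0 < K)
    (hlow : ∀ ξ : Fin n → ℤ, ξ ∉ E → ξ ≠ 0 → p ξ ≠ 0 →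
      K * l1norm ξ ^ t ≤ ‖p ξ‖) :
    GHr m s p := by
  obtain ⟨c, hc, hcl⟩ := l1_rpow_lower hn' t
  apply suffGH m s p hfin (E ∪ {0}) (hE.union (Set.finite_singleton 0)) (K * c)
    (by positivity)
  intro ξ hξ hp0
  rw [Set.mem_union, not_or, Set.mem_singleton_iff] at hξ
  obtain ⟨hξE, hξ0⟩ := hξ
  calc K * c * (1 + l2normSq ξ) ^ ((m - s)/2)
      ≤ K * c * (1 + l2normSq ξ) ^ (t/2) := by
        apply mul_le_mul_of_nonneg_left
          (Real.rpow_le_rpow_of_exponent_le (one_le_w ξ) (by linarith)) (by positivity)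
    _ = K * (c * (1 + l2normSq ξ) ^ (t/2)) := by ring
    _ ≤ K * l1norm ξ ^ t := mul_le_mul_of_nonneg_left (hcl ξ hξ0) (le_of_lt hK)
    _ ≤ ‖p ξ‖ := hlow ξ hξE hξ0 hp0

end parts
theorem stmt_2 {n : ℕ} (hn : 1 ≤ n) (m r : ℝ) (hr : 0 ≤ r)
    (p : (Fin n → ℤ) → ℂ) (hp : SymbolOrder m p) :
    ((∀ s : ℝ, r < s → GHr m s p) ∧ (∀ s : ℝ, 0 ≤ s → s < r → ¬ GHr m s p)) ↔
      ({ξ : Fin n → ℤ | p ξ = 0}.Finite ∧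
        (∀ ε : ℝ, 0 < ε → ∃ K : ℝ, 0 < K ∧ ∀ ξ : Fin n → ℤ, ξ ≠ 0 → p ξ ≠ 0 →
          K * l1norm ξ ^ (m - (r + ε)) ≤ ‖p ξ‖) ∧
        (0 < r → ∀ ε : ℝ, 0 < ε → ∃ K' : ℝ, 0 < K' ∧
          {ξ : Fin n → ℤ | ξ ≠ 0 ∧ 0 < ‖p ξ‖ ∧
            ‖p ξ‖ ≤ K' * l1norm ξ ^ (m - (r - ε))}.Infinite)) := by
  have hn' : 0 < n := hn
  constructor
  · rintro ⟨hGH, hnGH⟩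
    have hfin : {ξ : Fin n → ℤ | p ξ = 0}.Finite :=
      zeroset_finite m (r + 1) p (hGH (r + 1) (by linarith))
    have hii : ∀ ε : ℝ, 0 < ε → ∃ K : ℝ, 0 < K ∧ ∀ ξ : Fin n → ℤ, ξ ≠ 0 → p ξ ≠ 0 →
        K * l1norm ξ ^ (m - (r + ε)) ≤ ‖p ξ‖ := by
      intro ε hε
      exact lower_bound_of_GH hn' m (r + ε / 2) (m - (r + ε)) p (by linarith)
        (hGH _ (by linarith))
    refine ⟨hfin, hii, ?_⟩
    intro hrpos ε hε
    by_contra hno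
    push_neg at hno
    have hFfin : {ξ : Fin n → ℤ | ξ ≠ 0 ∧ 0 < ‖p ξ‖ ∧
        ‖p ξ‖ ≤ 1 * l1norm ξ ^ (m - (r - ε))}.Finite :=
      hno 1 one_pos
    set s := r - min ε r / 2 with hs
    have hmin : 0 < min ε r := lt_min hε hrpos
    have hminr : min ε r ≤ r := min_le_right ε r
    have hminε : min ε r ≤ ε := min_le_left ε r
    refine hnGH s (by rw [hs]; linarith) (by rw [hs]; linarith) ?_
    apply GH_of_l1_lower hn' m s (m - (r - ε)) (by rw [hs]; linarith) p hfin
      {ξ | ξ ≠ 0 ∧ 0 < ‖p ξ‖ ∧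
        ‖p ξ‖ ≤ 1 * l1norm ξ ^ (m - (r - ε))} hFfin 1 one_pos
    intro ξ hξE hξ0 hp0
    have hppos : 0 < ‖p ξ‖ := norm_pos_iff.mpr hp0
    rw [one_mul]
    by_contra hlt
    push_neg at hlt
    exact hξE ⟨hξ0, hppos, by rw [one_mul]; exact le_of_lt hlt⟩
  · rintro ⟨hfin, hii, hiii⟩
    constructor
    · intro s hs
      obtain ⟨K, hK, hKl⟩ := hii (s - r) (by linarith)
      apply GH_of_l1_lower hn' m s (m - (r + (s - r))) (by linarith) p hfin
        ∅ Set.finite_empty K hK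
      intro ξ _ hξ0 hp0
      exact hKl ξ hξ0 hp0
    · intro s hs0 hsr
      have hrpos : 0 < r := lt_of_le_of_lt hs0 hsr
      obtain ⟨K', hK', hSinf⟩ := hiii hrpos ((r - s) / 2) (by linarith)
      exact notGH_of_infinite hn' m s (m - (r - (r - s) / 2)) p K' (by linarith) hSinf
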